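/- Let X = (X_n)_{n≥0} be the final-letter process of a SVLMC defined by a bamboo blossom with stationary measure π, and let w = w₁…w_k be a finite word such that w̄ is not an internal node of the context tree. Then for |x| < 1 the generating function of the first occurrence of w is Φ_w^{(1)}(x) = x^k π(w)/((1−x) S_w(x)) and that of the r-th occurrence is Φ_w^{(r)}(x) = Φ_w^{(1)}(x)·(1 − 1/S_w(x))^{r−1}, where: (i) if w is of the form *00(10)^ℓ or *11(01)^ℓ0 (ℓ ∈ ℕ), S_w(x) = C_w(x) + ∑_{j≥k} q_{pref(w)}^{(j)}(w) x^j with C_w(x) = 1 + ∑_{j=1}^{k−1} 1[w_{j+1}…w_k = w₁…w_{k−j}] q_{pref(w)}^{(j)}(w_{k−j+1}…w_k) x^j; (ii) if w is of the form *00(10)^ℓ1, the same formulas hold with q_{pref(w)}^{(j)} replaced by q_{1(01)^ℓ00}^{(j)}, and if w is of the form *11(01)^ℓ, with q_{pref(w)}^{(j)} replaced by q_{(10)^ℓ11}^{(j)}. -/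

import Mathlib

open MeasureTheory
open ProbabilityTheory (Kernel IsMarkovKernel)
open scoped ENNReal

namespace VLMC

/-- Left-infinite sequences over the alphabet `{0,1}`; `s 0` is the rightmost
(most recent) letter, `s 1` the one before it, etc. -/
abbrev L : Type := ℕ → Bool

/-- Append the letter `b` on the right of the left-infinite sequence `s`. -/
def extend (b : Bool) (s : L) : L := fun n => match n with
  | 0 => b
  | k + 1 => s k

/-- Sequences whose letters, read from the rightmost one leftwards, start with `u`. -/
def cylRev (u : List Bool) : Set L := {s | ∀ i < u.length, s i = u.getD i false}

/-- The cylinder `Lw` of left-infinite sequences admitting the finite word `w` as a suffix. -/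
def cyl (w : List Bool) : Set L := cylRev w.reverse

/-- `π` is a stationary (invariant) probability measure for the kernel `κ`. -/
def IsStationary (κ : Kernel L L) (π : Measure L) : Prop :=
  ∀ B : Set L, MeasurableSet B → π B = ∫⁻ s, κ s B ∂π

/-- The word `(01)ⁿ`. -/
def pow01 : ℕ → List Bool
  | 0 => []
  | n + 1 => false :: true :: pow01 n

/-- The word `(10)ⁿ`. -/
def pow10 : ℕ → List Bool
  | 0 => []
  | n + 1 => true :: false :: pow10 n

/-- The left-infinite sequence `(10)^∞ = …1010`, which is the sequence matched
by the infinite context `(01)^∞` of the bamboo blossom. -/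
def altSeq : L := fun i => decide (i % 2 = 1)

/-- The left-infinite sequence `(10)^∞1 = …10101`. -/
def altSeq1 : L := fun i => decide (i % 2 = 0)

/-- `κ` is the transition kernel of the VLMC associated with the probabilized
bamboo blossom, whose contexts are the finite words `(01)ⁿ1` and `(01)ⁿ00`
(`n ≥ 0`), with probability measures `q1 n` and `q00 n` on the alphabet, and the
infinite word `(01)^∞`, with probability measure `qinf`. -/
def IsBambooKernel (q1 q00 : ℕ → Bool → ℝ≥0∞) (qinf : Bool → ℝ≥0∞)
    (κ : Kernel L L) : Prop :=
  (∀ (n : ℕ) (s : L), s ∈ cylRev (pow01 n ++ [true]) →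
      κ s = q1 n false • Measure.dirac (extend false s)
          + q1 n true • Measure.dirac (extend true s)) ∧
  (∀ (n : ℕ) (s : L), s ∈ cylRev (pow01 n ++ [false, false]) →
      κ s = q00 n false • Measure.dirac (extend false s)
          + q00 n true • Measure.dirac (extend true s)) ∧
  κ altSeq = qinf false • Measure.dirac (extend false altSeq)
           + qinf true • Measure.dirac (extend true altSeq)

/-- `cₙ = q₁(0)ⁿ ∏_{k<n} g k` : with `g k = q_{(01)ᵏ1}(1)` this is `cₙ(1)`, and
with `g k = q_{(01)ᵏ00}(1)` this is `cₙ(00)`. -/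
noncomputable def bambooC (qroot : ℝ≥0∞) (g : ℕ → ℝ≥0∞) (n : ℕ) : ℝ≥0∞ :=
  qroot ^ n * ∏ k ∈ Finset.range n, g k

attribute [local instance] Classical.propDecidable

/-- The transition probability of the bamboo blossom from the state `s` :
`q1 n` if the context of `s` is `(01)ⁿ1`, `q00 n` if it is `(01)ⁿ00`, and
`qinf` if `s` matches the infinite context `(01)^∞`. -/
noncomputable def bambooTheta (q1 q00 : ℕ → Bool → ℝ≥0∞) (qinf : Bool → ℝ≥0∞)
    (s : L) (b : Bool) : ℝ≥0∞ :=
  if h : ∃ n, s ∈ cylRev (pow01 n ++ [true]) then q1 h.choose b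
  else if h : ∃ n, s ∈ cylRev (pow01 n ++ [false, false]) then q00 h.choose b
  else qinf b

/-- Probability that, starting from the past `s`, the bamboo chain emits the
letters of the word `v` (in chronological order) during its next `|v|` steps. -/
noncomputable def bambooWordProb (q1 q00 : ℕ → Bool → ℝ≥0∞) (qinf : Bool → ℝ≥0∞) :
    L → List Bool → ℝ≥0∞
  | _, [] => 1
  | s, b :: v =>
      bambooTheta q1 q00 qinf s b * bambooWordProb q1 q00 qinf (extend b s) v

/-- The canonical past ending with the finite word `v`. -/
def pastOfWord (v : List Bool) : L := fun i => v.reverse.getD i false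

/-- `q_c⁽ʲ⁾(u) = P(X_{j-|u|+1} … X_j = u | X_{-(|c|-1)} … X_0 = c̄)` : the
conditional probability that the letters emitted at times `j-|u|+1, …, j` form
the word `u`, given a past; the intermediate letters are summed out. -/
noncomputable def qcondB (q1 q00 : ℕ → Bool → ℝ≥0∞) (qinf : Bool → ℝ≥0∞)
    (past : L) (j : ℕ) (u : List Bool) : ℝ≥0∞ :=
  ∑ v : Fin (j - u.length) → Bool,
    bambooWordProb q1 q00 qinf past (List.ofFn v ++ u)

/-- `w` occurs at position `t` in the word `v = X₁…X_n` (i.e. `X_{t-k+1}…X_t = w`). -/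
def occursAt (w v : List Bool) (t : ℕ) : Bool :=
  decide (w.length ≤ t ∧ t ≤ v.length ∧ (v.take t).drop (t - w.length) = w)

/-- The `r`-th occurrence of `w` in `v` is at position `t`. -/
def isRthOcc (w v : List Bool) (r t : ℕ) : Bool :=
  occursAt w v t && ((List.range t).countP (occursAt w v) == r - 1)

/-- `P(T_w⁽ʳ⁾ = n)` : the probability (under the stationary chain, expressed
through the stationary measure of cylinders) that the `r`-th occurrence of `w`
in `X₁ X₂ …` ends at position `n`. -/
noncomputable def probOcc (π : Measure L) (w : List Bool) (r n : ℕ) : ℝ :=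
  ∑ v : Fin n → Bool,
    if isRthOcc w (List.ofFn v) r n then (π (cyl (List.ofFn v))).toReal else 0

/-- The generating function `Φ_w⁽ʳ⁾(x) = ∑ₙ P(T_w⁽ʳ⁾ = n) xⁿ`. -/
noncomputable def genFun (π : Measure L) (w : List Bool) (r : ℕ) (x : ℝ) : ℝ :=
  ∑' n : ℕ, probOcc π w r n * x ^ n

/-- The (generalized probabilized) autocorrelation polynomial `C_w(x)`,
conditioning on the given past. -/
noncomputable def CwB (q1 q00 : ℕ → Bool → ℝ≥0∞) (qinf : Bool → ℝ≥0∞)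
    (past : L) (w : List Bool) (x : ℝ) : ℝ :=
  1 + ∑ j ∈ Finset.Ico 1 w.length,
    (if w.drop j = w.take (w.length - j) then
       (qcondB q1 q00 qinf past j (w.drop (w.length - j))).toReal * x ^ j
     else 0)

/-- `S_w(x) = C_w(x) + ∑_{j ≥ k} q⁽ʲ⁾(w) xʲ`, conditioning on the given past. -/
noncomputable def SwB (q1 q00 : ℕ → Bool → ℝ≥0∞) (qinf : Bool → ℝ≥0∞)
    (past : L) (w : List Bool) (x : ℝ) : ℝ :=
  CwB q1 q00 qinf past w x
    + ∑' j : ℕ, (qcondB q1 q00 qinf past (w.length + j) w).toReal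
        * x ^ (w.length + j)

section Aux

open List

/-! ### pow01 / pow10 basics -/

lemma pow01_length (n : ℕ) : (pow01 n).length = 2 * n := by
  induction n with
  | zero => rfl
  | succ n ih => simp [pow01, ih]; ring

lemma pow10_length (n : ℕ) : (pow10 n).length = 2 * n := by
  induction n with
  | zero => rfl
  | succ n ih => simp [pow10, ih]; ring

lemma pow10_succ' (n : ℕ) : pow10 (n+1) = pow10 n ++ [true, false] := by
  induction n with
  | zero => rfl
  | succ n ih =>
      rw [show pow10 (n+1+1) = true :: false :: pow10 (n+1) from rfl]
      conv_lhs => rw [ih]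
      rfl

lemma reverse_pow01 (n : ℕ) : (pow01 n).reverse = pow10 n := by
  induction n with
  | zero => rfl
  | succ n ih =>
      rw [show pow01 (n+1) = false :: true :: pow01 n from rfl, pow10_succ']
      simp [ih]

lemma pow01_getD (n : ℕ) : ∀ i, i < 2 * n → (pow01 n).getD i false = decide (i % 2 = 1) := by
  induction n with
  | zero => intro i h; omega
  | succ n ih =>
      intro i h
      rcases i with _ | _ | i
      · rfl
      · rfl
      · have : (pow01 (n+1)).getD (i+2) false = (pow01 n).getD i false := rfl
        rw [this, ih i (by omega), show (i+2) % 2 = i % 2 by omega]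

/-! ### contexts -/

/-- The context `(01)^n 1`. -/
def ctx1 (n : ℕ) : List Bool := pow01 n ++ [true]

/-- The context `(01)^n 00`. -/
def ctx00 (n : ℕ) : List Bool := pow01 n ++ [false, false]

lemma mem_ctx1_iff {s : L} {n : ℕ} :
    s ∈ cylRev (ctx1 n) ↔ (∀ i < 2*n, s i = decide (i % 2 = 1)) ∧ s (2*n) = true := by
  constructor
  · intro h
    refine ⟨fun i hi => ?_, ?_⟩
    · have := h i (by simp [ctx1, pow01_length]; omega)
      simp only [ctx1] at this; rwa [List.getD_append _ _ _ _ (by rw [pow01_length]; omega), pow01_getD n i hi] at this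
    · have := h (2*n) (by simp [ctx1, pow01_length])
      simp only [ctx1] at this; rwa [List.getD_append_right _ _ _ _ (by rw [pow01_length]), pow01_length,
        Nat.sub_self] at this
  · rintro ⟨h1, h2⟩ i hi
    simp only [ctx1, List.length_append, pow01_length, List.length_singleton] at hi
    rcases Nat.lt_or_ge i (2*n) with hlt | hge
    · simp only [ctx1]; rw [List.getD_append _ _ _ _ (by rw [pow01_length]; omega), pow01_getD n i hlt]
      exact h1 i hlt
    · have hi' : i = 2*n := by omega
      subst hi'
      simp only [ctx1]; rw [List.getD_append_right _ _ _ _ (by rw [pow01_length]), pow01_length, Nat.sub_self]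
      exact h2

lemma mem_ctx00_iff {s : L} {n : ℕ} :
    s ∈ cylRev (ctx00 n) ↔ (∀ i < 2*n, s i = decide (i % 2 = 1)) ∧ s (2*n) = false
      ∧ s (2*n+1) = false := by
  have hlen : (ctx00 n).length = 2*n+2 := by simp [ctx00, pow01_length]
  constructor
  · intro h
    refine ⟨fun i hi => ?_, ?_, ?_⟩
    · have := h i (by omega)
      simp only [ctx00] at this; rwa [List.getD_append _ _ _ _ (by rw [pow01_length]; omega), pow01_getD n i hi] at this
    · have := h (2*n) (by omega)
      simp only [ctx00] at this; rwa [List.getD_append_right _ _ _ _ (by rw [pow01_length]), pow01_length,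
        Nat.sub_self] at this
    · have := h (2*n+1) (by omega)
      simp only [ctx00] at this; rwa [List.getD_append_right _ _ _ _ (by rw [pow01_length]; omega), pow01_length,
        Nat.add_sub_cancel_left] at this
  · rintro ⟨h1, h2, h3⟩ i hi
    rw [hlen] at hi
    rcases Nat.lt_or_ge i (2*n) with hlt | hge
    · simp only [ctx00]; rw [List.getD_append _ _ _ _ (by rw [pow01_length]; omega), pow01_getD n i hlt]
      exact h1 i hlt
    · rcases Nat.lt_or_ge i (2*n+1) with hlt' | hge'
      · have hi' : i = 2*n := by omega
        subst hi'
        simp only [ctx00]; rw [List.getD_append_right _ _ _ _ (by rw [pow01_length]), pow01_length, Nat.sub_self]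
        exact h2
      · have hi' : i = 2*n+1 := by omega
        subst hi'
        simp only [ctx00]; rw [List.getD_append_right _ _ _ _ (by rw [pow01_length]; omega), pow01_length,
          Nat.add_sub_cancel_left]
        exact h3

lemma ctx1_inj {s : L} {n m : ℕ} (hn : s ∈ cylRev (ctx1 n)) (hm : s ∈ cylRev (ctx1 m)) :
    n = m := by
  by_contra hne
  rw [mem_ctx1_iff] at hn hm
  rcases Nat.lt_or_ge n m with h | h
  · have := hm.1 (2*n) (by omega)
    rw [hn.2] at this
    exact absurd (of_decide_eq_true this.symm) (by omega)
  · have := hn.1 (2*m) (by omega)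
    rw [hm.2] at this
    exact absurd (of_decide_eq_true this.symm) (by omega)

lemma ctx1_ctx00 {s : L} {n m : ℕ} (hn : s ∈ cylRev (ctx1 n)) (hm : s ∈ cylRev (ctx00 m)) :
    False := by
  rw [mem_ctx1_iff] at hn
  rw [mem_ctx00_iff] at hm
  rcases Nat.lt_or_ge n m with h | h
  · have := hm.1 (2*n) (by omega)
    rw [hn.2] at this
    exact absurd (of_decide_eq_true this.symm) (by omega)
  · rcases Nat.eq_or_lt_of_le h with h' | h'
    · subst h'
      have h2 := hm.2.1
      rw [hn.2] at h2
      simp at h2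
    · have := hn.1 (2*m+1) (by omega)
      rw [hm.2.2] at this
      rw [show (2*m+1) % 2 = 1 by omega] at this
      simp at this

lemma ctx00_inj {s : L} {n m : ℕ} (hn : s ∈ cylRev (ctx00 n)) (hm : s ∈ cylRev (ctx00 m)) :
    n = m := by
  by_contra hne
  rw [mem_ctx00_iff] at hn hm
  rcases Nat.lt_or_ge n m with h | h
  · have := hm.1 (2*n+1) (by omega)
    rw [hn.2.2, show (2*n+1) % 2 = 1 by omega] at this
    simp at this
  · have := hn.1 (2*m+1) (by omega)
    rw [hm.2.2, show (2*m+1) % 2 = 1 by omega] at this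
    simp at this

lemma altSeq_not_ctx1 (n : ℕ) : altSeq ∉ cylRev (ctx1 n) := by
  rw [mem_ctx1_iff]
  rintro ⟨-, h⟩
  simp [altSeq, Nat.mul_mod_right] at h

lemma altSeq_not_ctx00 (n : ℕ) : altSeq ∉ cylRev (ctx00 n) := by
  rw [mem_ctx00_iff]
  rintro ⟨-, -, h⟩
  have hT : altSeq (2*n+1) = true := by
    simp only [altSeq]
    rw [show (2*n+1) % 2 = 1 by omega]
    rfl
  rw [hT] at h
  simp at h

lemma altSeq_succ (m : ℕ) : altSeq (m+1) = ! altSeq m := by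
  simp only [altSeq]
  rcases Nat.even_or_odd' m with ⟨t, h | h⟩ <;> subst h
  · rw [show (2*t+1) % 2 = 1 by omega, show (2*t) % 2 = 0 by omega]; rfl
  · rw [show (2*t+1+1) % 2 = 0 by omega, show (2*t+1) % 2 = 1 by omega]; rfl

/-- Any sequence with a stutter at `(m, m+1)` lies in a finite context whose
relevant coordinates are `≤ m+1`. -/
lemma ctx_of_stutter (s : L) (m : ℕ) (hm : s (m+1) = s m) :
    (∃ n, 2*n ≤ m+1 ∧ s ∈ cylRev (ctx1 n)) ∨
    (∃ n, 2*n+1 ≤ m+1 ∧ s ∈ cylRev (ctx00 n)) := by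
  have hex : ∃ j, s j ≠ altSeq j := by
    by_contra h
    push_neg at h
    rw [h (m+1), h m, altSeq_succ] at hm
    exact Bool.not_ne_self _ hm
  set j := Nat.find hex with hj
  have hspec : s j ≠ altSeq j := Nat.find_spec hex
  have hmin : ∀ i, i < j → s i = altSeq i := fun i hi => by
    have := Nat.find_min hex hi
    simpa using this
  have hjle : j ≤ m + 1 := by
    by_contra h
    push_neg at h
    rw [hmin m (by omega), hmin (m+1) (by omega), altSeq_succ] at hm
    exact Bool.not_ne_self _ hm
  rcases Nat.even_or_odd' j with ⟨n, hn | hn⟩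
  · left
    refine ⟨n, by omega, ?_⟩
    rw [mem_ctx1_iff]
    constructor
    · intro i hi
      rw [hmin i (by omega)]
      rfl
    · have : s (2*n) ≠ altSeq (2*n) := by rw [← hn]; exact hspec
      have h0 : altSeq (2*n) = false := by simp [altSeq, Nat.mul_mod_right]
      rw [h0] at this
      simpa using this
  · right
    refine ⟨n, by omega, ?_⟩
    rw [mem_ctx00_iff]
    refine ⟨fun i hi => by rw [hmin i (by omega)]; rfl, ?_, ?_⟩
    · rw [hmin (2*n) (by omega)]
      simp [altSeq, Nat.mul_mod_right]
    · have : s (2*n+1) ≠ altSeq (2*n+1) := by rw [← hn]; exact hspec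
      have h1 : altSeq (2*n+1) = true := by
        simp only [altSeq]
        rw [show (2*n+1) % 2 = 1 by omega]
        rfl
      rw [h1] at this
      simpa using this

lemma ctx_cover (s : L) :
    (∃ n, s ∈ cylRev (ctx1 n)) ∨ (∃ n, s ∈ cylRev (ctx00 n)) ∨ s = altSeq := by
  by_cases hex : ∃ j, s j ≠ altSeq j
  · set j := Nat.find hex with hj
    have hspec : s j ≠ altSeq j := Nat.find_spec hex
    have hmin : ∀ i, i < j → s i = altSeq i := fun i hi => by
      have := Nat.find_min hex hi
      simpa using this
    rcases Nat.even_or_odd' j with ⟨n, hn | hn⟩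
    · left
      refine ⟨n, ?_⟩
      rw [mem_ctx1_iff]
      refine ⟨fun i hi => by rw [hmin i (by omega)]; rfl, ?_⟩
      have : s (2*n) ≠ altSeq (2*n) := by rw [← hn]; exact hspec
      have h0 : altSeq (2*n) = false := by simp [altSeq, Nat.mul_mod_right]
      rw [h0] at this
      simpa using this
    · right; left
      refine ⟨n, ?_⟩
      rw [mem_ctx00_iff]
      refine ⟨fun i hi => by rw [hmin i (by omega)]; rfl, ?_, ?_⟩
      · rw [hmin (2*n) (by omega)]
        simp [altSeq, Nat.mul_mod_right]
      · have : s (2*n+1) ≠ altSeq (2*n+1) := by rw [← hn]; exact hspec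
        have h1 : altSeq (2*n+1) = true := by
          have : (2*n+1) % 2 = 1 := by omega
          simp [altSeq, this]
        rw [h1] at this
        simpa using this
  · push_neg at hex
    exact Or.inr (Or.inr (funext hex))

end Aux
section Aux2

open MeasureTheory List

variable {q1 q00 : ℕ → Bool → ℝ≥0∞} {qinf : Bool → ℝ≥0∞}
variable {κ : ProbabilityTheory.Kernel L L} {π : Measure L}

lemma theta_eq_ctx1 {s : L} {n : ℕ} (h : s ∈ cylRev (ctx1 n)) :
    bambooTheta q1 q00 qinf s = q1 n := by
  funext b
  have hx : ∃ m, s ∈ cylRev (pow01 m ++ [true]) := ⟨n, h⟩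
  simp only [bambooTheta]
  rw [dif_pos hx]
  exact congrFun (congrArg q1 (ctx1_inj hx.choose_spec h)) b

lemma theta_eq_ctx00 {s : L} {n : ℕ} (h : s ∈ cylRev (ctx00 n)) :
    bambooTheta q1 q00 qinf s = q00 n := by
  funext b
  have hx1 : ¬ ∃ m, s ∈ cylRev (pow01 m ++ [true]) := by
    rintro ⟨m, hm⟩
    exact ctx1_ctx00 hm h
  have hx : ∃ m, s ∈ cylRev (pow01 m ++ [false, false]) := ⟨n, h⟩
  simp only [bambooTheta]
  rw [dif_neg hx1, dif_pos hx]
  exact congrFun (congrArg q00 (ctx00_inj hx.choose_spec h)) b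

lemma theta_altSeq : bambooTheta q1 q00 qinf altSeq = qinf := by
  funext b
  have h1 : ¬ ∃ m, altSeq ∈ cylRev (pow01 m ++ [true]) := by
    rintro ⟨m, hm⟩; exact altSeq_not_ctx1 m hm
  have h2 : ¬ ∃ m, altSeq ∈ cylRev (pow01 m ++ [false, false]) := by
    rintro ⟨m, hm⟩; exact altSeq_not_ctx00 m hm
  simp only [bambooTheta]
  rw [dif_neg h1, dif_neg h2]

lemma theta_spec (hκ : IsBambooKernel q1 q00 qinf κ) (s : L) :
    κ s = bambooTheta q1 q00 qinf s false • Measure.dirac (extend false s)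
        + bambooTheta q1 q00 qinf s true • Measure.dirac (extend true s) := by
  rcases ctx_cover s with ⟨n, h⟩ | ⟨n, h⟩ | h
  · rw [theta_eq_ctx1 h]; exact hκ.1 n s h
  · rw [theta_eq_ctx00 h]; exact hκ.2.1 n s h
  · subst h; rw [theta_altSeq]; exact hκ.2.2

lemma theta_sum_one (hq1 : ∀ n, q1 n false + q1 n true = 1)
    (hq00 : ∀ n, q00 n false + q00 n true = 1)
    (hqinf : qinf false + qinf true = 1) (s : L) :
    bambooTheta q1 q00 qinf s false + bambooTheta q1 q00 qinf s true = 1 := by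
  simp only [bambooTheta]
  split_ifs with h h'
  · exact hq1 _
  · exact hq00 _
  · exact hqinf

/-- `v` contains two adjacent equal letters. -/
def GoodW (v : List Bool) : Prop :=
  ∃ i, i + 1 < v.length ∧ v.reverse.getD (i+1) false = v.reverse.getD i false

lemma mem_cyl_iff {s : L} {v : List Bool} :
    s ∈ cyl v ↔ ∀ i < v.length, s i = v.reverse.getD i false := by
  simp [cyl, cylRev]

lemma pastOfWord_mem_cyl (v : List Bool) : pastOfWord v ∈ cyl v := by
  rw [mem_cyl_iff]
  intro i _
  rfl

lemma getD_reverse_of_suffix {v u : List Bool} (h : v <:+ u) {i : ℕ} (hi : i < v.length) :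
    u.reverse.getD i false = v.reverse.getD i false := by
  obtain ⟨t, rfl⟩ := h
  rw [List.reverse_append, List.getD_append _ _ _ _ (by simpa using hi)]

lemma mem_cyl_of_suffix {v u : List Bool} (h : v <:+ u) {s : L} (hs : s ∈ cyl u) :
    s ∈ cyl v := by
  rw [mem_cyl_iff] at hs ⊢
  intro i hi
  rw [← getD_reverse_of_suffix h hi]
  exact hs i (lt_of_lt_of_le hi h.length_le)

lemma GoodW.append {v : List Bool} (hg : GoodW v) (b : Bool) : GoodW (v ++ [b]) := by
  obtain ⟨i, hi, he⟩ := hg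
  refine ⟨i+1, by simp; omega, ?_⟩
  have hrev : (v ++ [b]).reverse = b :: v.reverse := by simp
  rw [hrev, List.getD_cons_succ, List.getD_cons_succ]
  exact he

lemma GoodW.of_suffix {v u : List Bool} (h : v <:+ u) (hg : GoodW v) : GoodW u := by
  obtain ⟨i, hi, he⟩ := hg
  exact ⟨i, lt_of_lt_of_le hi h.length_le, by
    rw [getD_reverse_of_suffix h hi, getD_reverse_of_suffix h (by omega)]
    exact he⟩

lemma theta_eq_on_good {v : List Bool} (hg : GoodW v) {s : L} (hs : s ∈ cyl v) :
    bambooTheta q1 q00 qinf s = bambooTheta q1 q00 qinf (pastOfWord v) := by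
  obtain ⟨m, hm1, hm2⟩ := hg
  have hstut : pastOfWord v (m+1) = pastOfWord v m := hm2
  have hagree : ∀ i, i < v.length → s i = pastOfWord v i := by
    rw [mem_cyl_iff] at hs; exact hs
  rcases ctx_of_stutter (pastOfWord v) m hstut with ⟨n, hb, hmem⟩ | ⟨n, hb, hmem⟩
  · have hmem' : s ∈ cylRev (ctx1 n) := by
      rw [mem_ctx1_iff] at hmem ⊢
      exact ⟨fun i hi => by rw [hagree i (by omega)]; exact hmem.1 i hi,
        by rw [hagree (2*n) (by omega)]; exact hmem.2⟩
    rw [theta_eq_ctx1 hmem', theta_eq_ctx1 hmem]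
  · have hmem' : s ∈ cylRev (ctx00 n) := by
      rw [mem_ctx00_iff] at hmem ⊢
      exact ⟨fun i hi => by rw [hagree i (by omega)]; exact hmem.1 i hi,
        by rw [hagree (2*n) (by omega)]; exact hmem.2.1,
        by rw [hagree (2*n+1) (by omega)]; exact hmem.2.2⟩
    rw [theta_eq_ctx00 hmem', theta_eq_ctx00 hmem]

lemma measurableSet_cylRev (u : List Bool) : MeasurableSet (cylRev u) := by
  have h : cylRev u = ⋂ i ∈ Finset.range u.length, (fun s : L => s i) ⁻¹' {u.getD i false} := by
    ext s
    simp [cylRev]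
  rw [h]
  exact MeasurableSet.biInter (Finset.range u.length).countable_toSet
    (fun i _ => measurable_pi_apply i (measurableSet_singleton _))

lemma measurableSet_cyl (v : List Bool) : MeasurableSet (cyl v) := measurableSet_cylRev _

lemma extend_mem_cyl_append {b c : Bool} {s : L} {v : List Bool} :
    extend c s ∈ cyl (v ++ [b]) ↔ c = b ∧ s ∈ cyl v := by
  have h1 : cyl (v ++ [b]) = cylRev (b :: v.reverse) := by
    rw [cyl]
    congr 1
    simp
  rw [h1]
  constructor
  · intro h
    have h0 : extend c s 0 = (b :: v.reverse).getD 0 false := h 0 (by simp)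
    have hs : s ∈ cyl v := by
      rw [mem_cyl_iff]
      intro i hi
      have := h (i+1) (by simp; omega)
      rwa [List.getD_cons_succ] at this
    exact ⟨h0, hs⟩
  · rintro ⟨rfl, hs⟩ i hi
    rcases i with _ | i
    · rfl
    · rw [List.getD_cons_succ]
      exact (mem_cyl_iff.mp hs) i (by simp at hi; omega)

lemma extend_pastOfWord (b : Bool) (v : List Bool) :
    extend b (pastOfWord v) = pastOfWord (v ++ [b]) := by
  have hrev : (v ++ [b]).reverse = b :: v.reverse := by simp
  funext i
  rcases i with _ | i
  · show b = (v ++ [b]).reverse.getD 0 false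
    rw [hrev]
    rfl
  · show pastOfWord v i = (v ++ [b]).reverse.getD (i+1) false
    rw [hrev, List.getD_cons_succ]
    rfl

lemma kappa_cyl_apply (hκ : IsBambooKernel q1 q00 qinf κ) {v : List Bool} (hg : GoodW v)
    (b : Bool) (s : L) :
    κ s (cyl (v ++ [b])) =
      Set.indicator (cyl v) (fun _ => bambooTheta q1 q00 qinf (pastOfWord v) b) s := by
  rw [theta_spec hκ s, Measure.add_apply, Measure.smul_apply, Measure.smul_apply,
    Measure.dirac_apply' _ (measurableSet_cyl _), Measure.dirac_apply' _ (measurableSet_cyl _)]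
  by_cases hs : s ∈ cyl v
  · have hθ := theta_eq_on_good (q1 := q1) (q00 := q00) (qinf := qinf) hg hs
    rw [Set.indicator_of_mem hs]
    cases b
    · rw [Set.indicator_of_mem (extend_mem_cyl_append.mpr ⟨rfl, hs⟩),
        Set.indicator_of_notMem (fun h => by simpa using (extend_mem_cyl_append.mp h).1)]
      simp [hθ]
    · rw [Set.indicator_of_mem (extend_mem_cyl_append.mpr ⟨rfl, hs⟩),
        Set.indicator_of_notMem (fun h => by simpa using (extend_mem_cyl_append.mp h).1)]
      simp [hθ]
  · rw [Set.indicator_of_notMem hs,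
      Set.indicator_of_notMem (fun h => hs (extend_mem_cyl_append.mp h).2),
      Set.indicator_of_notMem (fun h => hs (extend_mem_cyl_append.mp h).2)]
    simp

lemma pi_cyl_append (hπ : IsStationary κ π) (hκ : IsBambooKernel q1 q00 qinf κ)
    {v : List Bool} (hg : GoodW v) (b : Bool) :
    π (cyl (v ++ [b])) = bambooTheta q1 q00 qinf (pastOfWord v) b * π (cyl v) := by
  rw [hπ _ (measurableSet_cyl _)]
  rw [show (fun s => (κ s) (cyl (v ++ [b])))
      = Set.indicator (cyl v) (fun _ => bambooTheta q1 q00 qinf (pastOfWord v) b) from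
      funext fun s => kappa_cyl_apply hκ hg b s]
  rw [lintegral_indicator (measurableSet_cyl v), setLIntegral_const]

lemma pi_cyl_word (hπ : IsStationary κ π) (hκ : IsBambooKernel q1 q00 qinf κ) :
    ∀ (u v : List Bool), GoodW v →
    π (cyl (v ++ u)) = bambooWordProb q1 q00 qinf (pastOfWord v) u * π (cyl v) := by
  intro u
  induction u with
  | nil => intro v hg; simp [bambooWordProb]
  | cons b u ih =>
      intro v hg
      have h1 : v ++ b :: u = (v ++ [b]) ++ u := by simp
      have h2 : bambooWordProb q1 q00 qinf (pastOfWord v) (b :: u)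
          = bambooTheta q1 q00 qinf (pastOfWord v) b *
            bambooWordProb q1 q00 qinf (pastOfWord (v ++ [b])) u := by
        rw [← extend_pastOfWord]
        rfl
      rw [h1, ih _ (hg.append b), pi_cyl_append hπ hκ hg b, h2]
      ring

lemma suffix_append_singleton {z v : List Bool} (h : z <:+ v) (b : Bool) :
    z ++ [b] <:+ v ++ [b] := by
  obtain ⟨t, rfl⟩ := h
  exact ⟨t, by simp⟩

lemma wp_congr : ∀ (u z v v' : List Bool), GoodW z → z <:+ v → z <:+ v' →
    bambooWordProb q1 q00 qinf (pastOfWord v) u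
      = bambooWordProb q1 q00 qinf (pastOfWord v') u := by
  intro u
  induction u with
  | nil => intros; rfl
  | cons b u ih =>
      intro z v v' hg h1 h2
      show bambooTheta q1 q00 qinf (pastOfWord v) b
            * bambooWordProb q1 q00 qinf (extend b (pastOfWord v)) u
          = bambooTheta q1 q00 qinf (pastOfWord v') b
            * bambooWordProb q1 q00 qinf (extend b (pastOfWord v')) u
      have e1 : bambooTheta q1 q00 qinf (pastOfWord v) = bambooTheta q1 q00 qinf (pastOfWord z) :=
        theta_eq_on_good hg (mem_cyl_of_suffix h1 (pastOfWord_mem_cyl v))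
      have e2 : bambooTheta q1 q00 qinf (pastOfWord v') = bambooTheta q1 q00 qinf (pastOfWord z) :=
        theta_eq_on_good hg (mem_cyl_of_suffix h2 (pastOfWord_mem_cyl v'))
      rw [e1, e2, extend_pastOfWord, extend_pastOfWord]
      congr 1
      exact ih (z ++ [b]) _ _ (hg.append b) (suffix_append_singleton h1 b)
        (suffix_append_singleton h2 b)

end Aux2
section Aux3

open MeasureTheory List

variable {q1 q00 : ℕ → Bool → ℝ≥0∞} {qinf : Bool → ℝ≥0∞}
variable {κ : ProbabilityTheory.Kernel L L} {π : Measure L}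

/-- The finite set of words of length `n`. -/
def Wd (n : ℕ) : Finset (List Bool) := (Finset.univ : Finset (Fin n → Bool)).image List.ofFn

lemma mem_Wd {n : ℕ} {l : List Bool} : l ∈ Wd n ↔ l.length = n := by
  constructor
  · intro h
    rw [Wd, Finset.mem_image] at h
    obtain ⟨v, -, rfl⟩ := h
    simp
  · intro h
    subst h
    rw [Wd, Finset.mem_image]
    exact ⟨l.get, Finset.mem_univ _, List.ofFn_get l⟩

lemma sum_Wd {M : Type*} [AddCommMonoid M] (n : ℕ) (F : List Bool → M) :
    ∑ v : Fin n → Bool, F (List.ofFn v) = ∑ l ∈ Wd n, F l := by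
  rw [Wd, Finset.sum_image (fun a _ b _ h => List.ofFn_injective h)]

lemma Wd_add (t s : ℕ) : Wd (t + s) = ((Wd t) ×ˢ (Wd s)).image (fun p => p.1 ++ p.2) := by
  ext l
  simp only [mem_Wd, Finset.mem_image, Finset.mem_product]
  constructor
  · intro h
    exact ⟨(l.take t, l.drop t), ⟨by simp [mem_Wd]; omega, by simp [mem_Wd]; omega⟩,
      List.take_append_drop t l⟩
  · rintro ⟨⟨a, b⟩, ⟨ha, hb⟩, rfl⟩
    show (a ++ b).length = t + s
    rw [List.length_append, show a.length = t from ha, show b.length = s from hb]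

lemma sum_Wd_append {M : Type*} [AddCommMonoid M] (t s : ℕ) (F : List Bool → M) :
    ∑ l ∈ Wd (t + s), F l = ∑ a ∈ Wd t, ∑ b ∈ Wd s, F (a ++ b) := by
  rw [Wd_add, Finset.sum_image, ← Finset.sum_product']
  rintro ⟨a, b⟩ hab ⟨c, d⟩ hcd h
  simp only [Finset.coe_product, Set.mem_prod, Finset.mem_coe, Finset.mem_product, mem_Wd] at hab hcd
  obtain ⟨h1, h2⟩ := List.append_inj h (by rw [show a.length = t from hab.1, show c.length = t from hcd.1])
  exact Prod.ext h1 h2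

lemma Wd_zero : Wd 0 = {[]} := by
  ext l
  simp [mem_Wd, List.length_eq_zero_iff]

lemma Wd_one : Wd 1 = {[false], [true]} := by
  ext l
  simp only [mem_Wd, Finset.mem_insert, Finset.mem_singleton]
  constructor
  · intro h
    rcases l with - | ⟨a, l⟩
    · simp at h
    · rcases l with - | ⟨b, l⟩
      · cases a
        · exact Or.inl rfl
        · exact Or.inr rfl
      · simp at h
  · rintro (rfl | rfl) <;> rfl

lemma wp_cons (s : L) (b : Bool) (u : List Bool) :
    bambooWordProb q1 q00 qinf s (b :: u)
      = bambooTheta q1 q00 qinf s b * bambooWordProb q1 q00 qinf (extend b s) u := rfl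

lemma wp_sum_one (hq1 : ∀ n, q1 n false + q1 n true = 1)
    (hq00 : ∀ n, q00 n false + q00 n true = 1)
    (hqinf : qinf false + qinf true = 1) :
    ∀ n (s : L), ∑ u ∈ Wd n, bambooWordProb q1 q00 qinf s u = 1 := by
  intro n
  induction n with
  | zero => intro s; rw [Wd_zero]; simp [bambooWordProb]
  | succ n ih =>
      intro s
      rw [show n + 1 = 1 + n by omega, sum_Wd_append, Wd_one]
      rw [Finset.sum_insert (by simp), Finset.sum_singleton]
      have e1 : ∀ b, ∑ x ∈ Wd n, bambooWordProb q1 q00 qinf s ([b] ++ x)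
          = bambooTheta q1 q00 qinf s b := by
        intro b
        simp only [List.singleton_append, wp_cons]
        rw [← Finset.mul_sum, ih (extend b s), mul_one]
      rw [e1, e1]
      exact theta_sum_one hq1 hq00 hqinf s

lemma wp_le_one (hq1 : ∀ n, q1 n false + q1 n true = 1)
    (hq00 : ∀ n, q00 n false + q00 n true = 1)
    (hqinf : qinf false + qinf true = 1) (s : L) (u : List Bool) :
    bambooWordProb q1 q00 qinf s u ≤ 1 := by
  rw [← wp_sum_one hq1 hq00 hqinf u.length s]
  exact Finset.single_le_sum (fun l _ => zero_le) (mem_Wd.mpr rfl)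

lemma wp_past_append : ∀ (a b v : List Bool),
    bambooWordProb q1 q00 qinf (pastOfWord v) (a ++ b)
      = bambooWordProb q1 q00 qinf (pastOfWord v) a
        * bambooWordProb q1 q00 qinf (pastOfWord (v ++ a)) b := by
  intro a
  induction a with
  | nil => intro b v; simp [bambooWordProb]
  | cons c a ih =>
      intro b v
      rw [List.cons_append, wp_cons, extend_pastOfWord, ih b (v ++ [c]), wp_cons,
        extend_pastOfWord, List.append_assoc]
      rw [List.singleton_append, mul_assoc]

lemma qcondB_eq_sum (p : L) (j : ℕ) (u : List Bool) :
    qcondB q1 q00 qinf p j u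
      = ∑ m ∈ Wd (j - u.length), bambooWordProb q1 q00 qinf p (m ++ u) := by
  rw [qcondB]
  exact sum_Wd (j - u.length) (fun l => bambooWordProb q1 q00 qinf p (l ++ u))

/-! ### suffix and occurrence combinatorics -/

lemma suffix_of_suffix_le {w X l : List Bool} (h1 : w <:+ l) (h2 : X <:+ l)
    (h : w.length ≤ X.length) : w <:+ X := by
  have hX := h2.length_le
  rw [List.suffix_iff_eq_drop] at h1 h2
  have hd : l.drop (l.length - w.length)
      = (l.drop (l.length - X.length)).drop (X.length - w.length) := by
    rw [List.drop_drop]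
    congr 1
    omega
  rw [h1, hd, ← h2]
  exact List.drop_suffix _ _

lemma occursAt_iff {w v : List Bool} {t : ℕ} :
    occursAt w v t = true ↔ w.length ≤ t ∧ t ≤ v.length ∧ w <:+ v.take t := by
  rw [occursAt, decide_eq_true_eq]
  constructor
  · rintro ⟨h1, h2, h3⟩
    refine ⟨h1, h2, ?_⟩
    rw [List.suffix_iff_eq_drop, List.length_take, min_eq_left h2]
    exact h3.symm
  · rintro ⟨h1, h2, h3⟩
    refine ⟨h1, h2, ?_⟩
    rw [List.suffix_iff_eq_drop, List.length_take, min_eq_left h2] at h3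
    exact h3.symm

lemma isRthOcc_iff {w v : List Bool} {r t : ℕ} :
    isRthOcc w v r t = true ↔
      occursAt w v t = true ∧ (List.range t).countP (occursAt w v) = r - 1 := by
  rw [isRthOcc, Bool.and_eq_true, beq_iff_eq]

lemma occursAt_take {w v : List Bool} {s t : ℕ} (hst : s ≤ t) :
    occursAt w (v.take t) s = occursAt w v s := by
  have h1 : (v.take t).take s = v.take s := by rw [List.take_take, min_eq_left hst]
  rw [occursAt, occursAt, h1]
  apply decide_eq_decide.mpr
  simp only [List.length_take]
  constructor
  · rintro ⟨a, b, c⟩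
    exact ⟨a, by omega, c⟩
  · rintro ⟨a, b, c⟩
    refine ⟨a, ?_, c⟩
    rcases Nat.le_total t v.length with h | h
    · omega
    · omega

lemma countP_occ_take {w v : List Bool} (t : ℕ) :
    (List.range t).countP (occursAt w (v.take t)) = (List.range t).countP (occursAt w v) := by
  apply List.countP_congr
  intro s hs
  rw [List.mem_range] at hs
  rw [occursAt_take (le_of_lt hs)]

lemma countP_range_add (p : ℕ → Bool) (a b : ℕ) :
    (List.range (a + b)).countP p
      = (List.range a).countP p + (List.range b).countP (fun i => p (a + i)) := by
  rw [List.range_add, List.countP_append, List.countP_map]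
  rfl

lemma countP_range_succ (p : ℕ → Bool) (a : ℕ) :
    (List.range (a+1)).countP p = (List.range a).countP p + (if p a then 1 else 0) := by
  rw [List.range_succ, List.countP_append, List.countP_singleton]

/-- Translation of occurrences past a checkpoint `t` where the prefix ends with `w`. -/
lemma occ_shift {w v : List Bool} {t : ℕ} (hw : w <:+ v.take t) (hk : w.length ≤ t)
    (ht : t ≤ v.length) {s : ℕ} (hs : t ≤ s) :
    occursAt w v s = occursAt w (w ++ v.drop t) (w.length + (s - t)) := by
  obtain ⟨c, hc⟩ := hw
  have htv : (v.take t).length = t := by rw [List.length_take, min_eq_left ht]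
  have hcl : c.length = t - w.length := by
    have := congrArg List.length hc
    simp only [List.length_append] at this
    omega
  have hs1 : v.take s = (c ++ w) ++ (v.drop t).take (s - t) := by
    rw [hc, ← List.take_add]
    congr 1
    omega
  have hC : (v.take s).drop (s - w.length)
      = ((w ++ v.drop t).take (w.length + (s - t))).drop (w.length + (s - t) - w.length) := by
    rw [hs1, List.append_assoc, List.take_length_add_append,
      show s - w.length = c.length + (s - t) by omega, List.drop_length_add_append,
      show w.length + (s - t) - w.length = s - t by omega]
  rw [occursAt, occursAt]
  apply decide_eq_decide.mpr
  have hlen : (w ++ v.drop t).length = w.length + (v.length - t) := by simp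
  constructor
  · rintro ⟨a, b, cc⟩
    exact ⟨by omega, by rw [hlen]; omega, by rw [← hC]; exact cc⟩
  · rintro ⟨a, b, cc⟩
    rw [hlen] at b
    exact ⟨by omega, by omega, by rw [hC]; exact cc⟩

end Aux3
section Aux4

open MeasureTheory List Finset

variable {q1 q00 : ℕ → Bool → ℝ≥0∞} {qinf : Bool → ℝ≥0∞}
variable {κ : ProbabilityTheory.Kernel L L} {π : Measure L}

/-- `P(T_w^{(r)} = n)` as an `ℝ≥0∞`-valued finite sum. -/
noncomputable def PPm (π : Measure L) (w : List Bool) (r n : ℕ) : ℝ≥0∞ :=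
  ∑ v ∈ Wd n, if isRthOcc w v r n then π (cyl v) else 0

/-- `g_j` : probability that `w` occurs at gap `j` after an occurrence of `w`. -/
noncomputable def ggf (q1 q00 : ℕ → Bool → ℝ≥0∞) (qinf : Bool → ℝ≥0∞)
    (z w : List Bool) (j : ℕ) : ℝ≥0∞ :=
  ∑ u ∈ Wd j, if w <:+ w ++ u then bambooWordProb q1 q00 qinf (pastOfWord z) u else 0

/-- first new occurrence of `w` exactly at gap `j`. -/
def nextOccP (w u : List Bool) (j : ℕ) : Prop :=
  w <:+ w ++ u ∧ 0 < j ∧ ∀ t, 0 < t → t < j → ¬ w <:+ (w ++ u).take (w.length + t)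

/-- `f_j` : probability that the first new occurrence of `w` is at gap `j`. -/
noncomputable def fff (q1 q00 : ℕ → Bool → ℝ≥0∞) (qinf : Bool → ℝ≥0∞)
    (z w : List Bool) (j : ℕ) : ℝ≥0∞ :=
  ∑ u ∈ Wd j, if nextOccP w u j then bambooWordProb q1 q00 qinf (pastOfWord z) u else 0

lemma take_self_of_len {v : List Bool} {t : ℕ} (h : v.length = t) : v.take t = v := by
  rw [← h]
  exact List.take_length

/-- Per-word decomposition of an occurrence at `n` by the first occurrence. -/
lemma PV1 {w : List Bool} {n : ℕ} {v : List Bool} (hv : v.length = n) (π : Measure L) :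
    (if occursAt w v n then π (cyl v) else 0)
      = ∑ t ∈ Finset.range (n+1),
          (if isRthOcc w (v.take t) 1 t = true ∧ w <:+ w ++ v.drop t
           then π (cyl v) else 0) := by
  have hvn : v.take n = v := take_self_of_len hv
  by_cases hocc : occursAt w v n = true
  · have hex : ∃ t, occursAt w v t = true := ⟨n, hocc⟩
    have hT : occursAt w v (Nat.find hex) = true := Nat.find_spec hex
    set T := Nat.find hex with hTdef
    have hTn : T ≤ n := Nat.find_min' hex hocc
    obtain ⟨hkT, hTv, hsufT⟩ := occursAt_iff.mp hT
    have hwv : w <:+ v := by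
      obtain ⟨-, -, h3⟩ := occursAt_iff.mp hocc
      rwa [hvn] at h3
    have hwd : w <:+ w ++ v.drop T := by
      obtain ⟨c, hc⟩ := hsufT
      have h2 : w ++ v.drop T <:+ v :=
        ⟨c, by rw [← List.append_assoc, hc, List.take_append_drop]⟩
      exact suffix_of_suffix_le hwv h2 (by simp)
    have hcond : isRthOcc w (v.take T) 1 T = true ∧ w <:+ w ++ v.drop T := by
      refine ⟨?_, hwd⟩
      rw [isRthOcc_iff]
      refine ⟨by rw [occursAt_take le_rfl]; exact hT, ?_⟩
      have h0 : (List.range T).countP (occursAt w v) = 0 :=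
        List.countP_eq_zero.mpr (fun s hs => Nat.find_min hex (List.mem_range.mp hs))
      rw [countP_occ_take, h0]
    rw [Finset.sum_eq_single_of_mem T (Finset.mem_range.mpr (by omega))]
    · rw [if_pos hcond, if_pos hocc]
    · intro t ht hne
      rw [if_neg]
      rintro ⟨h1, h2⟩
      apply hne
      rw [isRthOcc_iff] at h1
      obtain ⟨h1a, h1b⟩ := h1
      rw [occursAt_take le_rfl] at h1a
      have hTle : T ≤ t := Nat.find_min' hex h1a
      rcases Nat.lt_or_ge T t with hlt | hge
      · exfalso
        rw [countP_occ_take] at h1b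
        have h1b' : (List.range t).countP (occursAt w v) = 0 := by omega
        exact (List.countP_eq_zero.mp h1b' T (List.mem_range.mpr hlt)) hT
      · omega
  · rw [if_neg hocc]
    symm
    apply Finset.sum_eq_zero
    intro t ht
    rw [if_neg]
    rintro ⟨h1, h2⟩
    apply hocc
    rw [isRthOcc_iff] at h1
    obtain ⟨h1a, -⟩ := h1
    rw [occursAt_take le_rfl] at h1a
    obtain ⟨hk, htn', hsuf⟩ := occursAt_iff.mp h1a
    obtain ⟨c, hc⟩ := hsuf
    have h3 : w ++ v.drop t <:+ v :=
      ⟨c, by rw [← List.append_assoc, hc, List.take_append_drop]⟩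
    have hwv : w <:+ v := h2.trans h3
    rw [occursAt_iff]
    exact ⟨by omega, by omega, by rw [hvn]; exact hwv⟩

lemma mem_cyl_append_iff {s : L} {a w : List Bool} :
    s ∈ cyl (a ++ w) ↔ s ∈ cyl w ∧
      (∀ i < a.length, s (w.length + i) = a.reverse.getD i false) := by
  have hrev : (a ++ w).reverse = w.reverse ++ a.reverse := by simp
  rw [mem_cyl_iff, mem_cyl_iff]
  constructor
  · intro h
    constructor
    · intro i hi
      rw [h i (by simp only [List.length_append]; omega), hrev,
        List.getD_append _ _ _ _ (by simpa using hi)]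
    · intro i hi
      rw [h (w.length + i) (by simp only [List.length_append]; omega), hrev,
        List.getD_append_right _ _ _ _ (by simp), List.length_reverse,
        Nat.add_sub_cancel_left]
  · rintro ⟨h1, h2⟩ i hi
    simp only [List.length_append] at hi
    rcases Nat.lt_or_ge i w.length with hlt | hge
    · rw [h1 i hlt, hrev, List.getD_append _ _ _ _ (by simpa using hlt)]
    · rw [hrev, List.getD_append_right _ _ _ _ (by simpa using hge)]
      have := h2 (i - w.length) (by omega)
      rw [show w.length + (i - w.length) = i by omega] at this
      rw [this, List.length_reverse]

lemma list_eq_of_getD {a b : List Bool} (hlen : a.length = b.length)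
    (h : ∀ i < a.length, a.getD i false = b.getD i false) : a = b := by
  apply List.ext_getElem hlen
  intro i h1 h2
  have := h i h1
  rwa [List.getD_eq_getElem _ _ h1, List.getD_eq_getElem _ _ h2] at this

/-- Additivity: summing cylinders over all prefixes of a fixed word. -/
lemma sum_pi_cyl_append (π : Measure L) (m : ℕ) (w : List Bool) :
    ∑ a ∈ Wd m, π (cyl (a ++ w)) = π (cyl w) := by
  classical
  have hdisj : (Wd m : Set (List Bool)).PairwiseDisjoint (fun a => cyl (a ++ w)) := by
    intro a ha b hb hab
    rw [Function.onFun, Set.disjoint_left]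
    intro s hsa hsb
    apply hab
    rw [mem_cyl_append_iff] at hsa hsb
    have ha' := mem_Wd.mp (by exact_mod_cast ha)
    have hb' := mem_Wd.mp (by exact_mod_cast hb)
    apply list_eq_of_getD (by omega)
    intro i hi
    have e1 : a.reverse.getD (a.length - 1 - i) false = s (w.length + (a.length - 1 - i)) :=
      (hsa.2 _ (by omega)).symm
    have e2 : b.reverse.getD (a.length - 1 - i) false = s (w.length + (a.length - 1 - i)) :=
      (hsb.2 _ (by omega)).symm
    have hrr : ∀ (c : List Bool), c.length = m → ∀ j < c.length,
        c.getD j false = c.reverse.getD (c.length - 1 - j) false := by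
      intro c hc j hj
      rw [List.getD_eq_getElem _ _ hj, List.getD_eq_getElem _ _ (by
        rw [List.length_reverse]; omega)]
      rw [List.getElem_reverse]
      congr 1
      omega
    rw [hrr a ha' i hi, hrr b hb' i (by omega), e1]
    rw [show b.length - 1 - i = a.length - 1 - i by omega]
    exact e2.symm
  have hunion : ⋃ a ∈ Wd m, cyl (a ++ w) = cyl w := by
    ext s
    simp only [Set.mem_iUnion]
    constructor
    · rintro ⟨a, ha, hs⟩
      exact (mem_cyl_append_iff.mp hs).1
    · intro hs
      refine ⟨(List.ofFn (fun j : Fin m => s (w.length + j))).reverse, ?_, ?_⟩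
      · rw [mem_Wd]
        simp
      · rw [mem_cyl_append_iff]
        refine ⟨hs, ?_⟩
        intro i hi
        rw [List.length_reverse, List.length_ofFn] at hi
        rw [List.reverse_reverse]
        rw [List.getD_eq_getElem _ _ (by simpa using hi)]
        simp
  rw [← hunion, measure_biUnion_finset hdisj (fun a _ => measurableSet_cyl _)]

lemma I1a (π : Measure L) {w : List Bool} {n : ℕ} (hw1 : 1 ≤ w.length)
    (hkn : w.length ≤ n) :
    ∑ v ∈ Wd n, (if occursAt w v n then π (cyl v) else 0) = π (cyl w) := by
  have hn : n = (n - w.length) + w.length := by omega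
  rw [hn, sum_Wd_append]
  have hstep : ∀ a ∈ Wd (n - w.length),
      ∑ b ∈ Wd w.length,
        (if occursAt w (a ++ b) ((n - w.length) + w.length) then π (cyl (a ++ b)) else 0)
        = π (cyl (a ++ w)) := by
    intro a ha
    rw [mem_Wd] at ha
    have hcond : ∀ b ∈ Wd w.length,
        (occursAt w (a ++ b) ((n - w.length) + w.length) = true) ↔ b = w := by
      intro b hb
      rw [mem_Wd] at hb
      have hlen : (a ++ b).length = (n - w.length) + w.length := by
        rw [List.length_append, ha, hb]
      rw [occursAt_iff]
      constructor
      · rintro ⟨-, -, hsuf⟩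
        rw [take_self_of_len hlen] at hsuf
        rw [List.suffix_iff_eq_drop, hlen] at hsuf
        rw [hsuf, show (n - w.length) + w.length - w.length = a.length by omega,
          List.drop_left]
      · rintro rfl
        refine ⟨by omega, by omega, ?_⟩
        rw [take_self_of_len hlen]
        exact ⟨a, rfl⟩
    rw [Finset.sum_eq_single_of_mem w (mem_Wd.mpr rfl)]
    · rw [if_pos ((hcond w (mem_Wd.mpr rfl)).mpr rfl)]
    · intro b hb hne
      rw [if_neg]
      intro hc
      exact hne ((hcond b hb).mp hc)
  rw [Finset.sum_congr rfl hstep]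
  exact sum_pi_cyl_append π _ w

lemma ite_and_mul_ennreal {P Q : Prop} [Decidable P] [Decidable Q] (x y : ℝ≥0∞) :
    (if P ∧ Q then x * y else 0) = (if P then x else 0) * (if Q then y else 0) := by
  by_cases hP : P <;> by_cases hQ : Q <;> simp [hP, hQ]

/-- Renewal decomposition of occurrences at `n` by the first occurrence time. -/
lemma I1b (hπ : IsStationary κ π) (hκ : IsBambooKernel q1 q00 qinf κ)
    {z w : List Bool} (hz : GoodW z) (hzw : z <:+ w) (n : ℕ) :
    ∑ v ∈ Wd n, (if occursAt w v n then π (cyl v) else 0)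
      = ∑ t ∈ Finset.range (n+1), PPm π w 1 t * ggf q1 q00 qinf z w (n - t) := by
  have step1 : ∑ v ∈ Wd n, (if occursAt w v n then π (cyl v) else 0)
      = ∑ v ∈ Wd n, ∑ t ∈ Finset.range (n+1),
          (if isRthOcc w (v.take t) 1 t = true ∧ w <:+ w ++ v.drop t
           then π (cyl v) else 0) :=
    Finset.sum_congr rfl (fun v hv => PV1 (mem_Wd.mp hv) π)
  rw [step1, Finset.sum_comm]
  apply Finset.sum_congr rfl
  intro t ht
  rw [Finset.mem_range] at ht
  have htn : t ≤ n := by omega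
  conv_lhs => rw [show n = t + (n - t) by omega, sum_Wd_append]
  rw [PPm, ggf, Finset.sum_mul_sum]
  apply Finset.sum_congr rfl
  intro a ha
  apply Finset.sum_congr rfl
  intro b hb
  rw [mem_Wd] at ha hb
  have htake : (a ++ b).take t = a := by rw [← ha, List.take_left]
  have hdrop : (a ++ b).drop t = b := by rw [← ha, List.drop_left]
  rw [htake, hdrop, ← ite_and_mul_ennreal]
  by_cases hc : isRthOcc w a 1 t = true ∧ w <:+ w ++ b
  · rw [if_pos hc, if_pos hc]
    -- a ends with w, hence with z
    obtain ⟨h1, h2⟩ := hc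
    rw [isRthOcc_iff] at h1
    obtain ⟨hocc, -⟩ := h1
    obtain ⟨-, -, hsuf⟩ := occursAt_iff.mp hocc
    rw [take_self_of_len ha] at hsuf
    have hza : z <:+ a := hzw.trans hsuf
    have hga : GoodW a := GoodW.of_suffix hza hz
    rw [pi_cyl_word hπ hκ b a hga, wp_congr b z a z hz hza (List.suffix_refl z), mul_comm]
  · rw [if_neg hc, if_neg hc]
end Aux4
section Aux5

open MeasureTheory List Finset

variable {q1 q00 : ℕ → Bool → ℝ≥0∞} {qinf : Bool → ℝ≥0∞}
variable {κ : ProbabilityTheory.Kernel L L} {π : Measure L}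

lemma wu_take (w u : List Bool) (t : ℕ) :
    (w ++ u).take (w.length + t) = w ++ u.take t := List.take_length_add_append t

lemma suffix_wu_of_prefix_occ {w u : List Bool} {t : ℕ}
    (h1 : w <:+ w ++ u.take t) (h2 : w <:+ w ++ u.drop t) : w <:+ w ++ u := by
  obtain ⟨c, hc⟩ := h1
  have h3 : w ++ u.drop t <:+ w ++ u :=
    ⟨c, by rw [← List.append_assoc, hc, List.append_assoc, List.take_append_drop]⟩
  exact h2.trans h3

/-- Per-word decomposition of an occurrence at gap `j` by the first new occurrence. -/
lemma PV2 {w : List Bool} {j : ℕ} (hj : 0 < j) {u : List Bool} (hu : u.length = j)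
    (c : ℝ≥0∞) :
    (if w <:+ w ++ u then c else 0)
      = ∑ t ∈ Finset.range (j+1),
          (if nextOccP w (u.take t) t ∧ w <:+ w ++ u.drop t then c else 0) := by
  by_cases hocc : w <:+ w ++ u
  · have hex : ∃ t, t ≤ j ∧ 0 < t ∧ w <:+ (w ++ u).take (w.length + t) :=
      ⟨j, le_rfl, hj, by
        rw [take_self_of_len (by simp [hu])]
        exact hocc⟩
    have hT := Nat.find_spec hex
    set T := Nat.find hex with hTdef
    obtain ⟨hTj, hT0, hTocc⟩ := hT
    rw [wu_take] at hTocc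
    have hnext : nextOccP w (u.take T) T := by
      refine ⟨hTocc, hT0, ?_⟩
      intro t ht0 htT hsuf
      rw [wu_take, List.take_take, min_eq_left (le_of_lt htT)] at hsuf
      exact Nat.find_min hex htT ⟨by omega, ht0, by rw [wu_take]; exact hsuf⟩
    have hdropT : w <:+ w ++ u.drop T := by
      obtain ⟨d, hd⟩ := hTocc
      have h3 : w ++ u.drop T <:+ w ++ u :=
        ⟨d, by rw [← List.append_assoc, hd, List.append_assoc, List.take_append_drop]⟩
      exact suffix_of_suffix_le hocc h3 (by simp)
    rw [if_pos hocc, Finset.sum_eq_single_of_mem T (Finset.mem_range.mpr (by omega))]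
    · rw [if_pos ⟨hnext, hdropT⟩]
    · intro t ht hne
      rw [if_neg]
      rintro ⟨hn, hs2⟩
      apply hne
      rw [Finset.mem_range] at ht
      have hTt : T ≤ t := Nat.find_min' hex ⟨by omega, hn.2.1, by rw [wu_take]; exact hn.1⟩
      rcases Nat.lt_or_ge T t with hlt | hge
      · exfalso
        apply hn.2.2 T hT0 hlt
        rw [wu_take, List.take_take, min_eq_left (le_of_lt hlt)]
        exact hTocc
      · omega
  · rw [if_neg hocc]
    symm
    apply Finset.sum_eq_zero
    intro t ht
    rw [if_neg]
    rintro ⟨hn, hs2⟩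
    exact hocc (suffix_wu_of_prefix_occ hn.1 hs2)

/-- Renewal equation for the gap occurrence probabilities. -/
lemma I2 {z w : List Bool} (hz : GoodW z) (hzw : z <:+ w) {j : ℕ} (hj : 0 < j) :
    ggf q1 q00 qinf z w j
      = ∑ t ∈ Finset.range (j+1),
          fff q1 q00 qinf z w t * ggf q1 q00 qinf z w (j - t) := by
  have step1 : ggf q1 q00 qinf z w j
      = ∑ u ∈ Wd j, ∑ t ∈ Finset.range (j+1),
          (if nextOccP w (u.take t) t ∧ w <:+ w ++ u.drop t
           then bambooWordProb q1 q00 qinf (pastOfWord z) u else 0) := by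
    rw [ggf]
    exact Finset.sum_congr rfl (fun u hu => PV2 hj (mem_Wd.mp hu) _)
  rw [step1, Finset.sum_comm]
  apply Finset.sum_congr rfl
  intro t ht
  rw [Finset.mem_range] at ht
  conv_lhs => rw [show j = t + (j - t) by omega, sum_Wd_append]
  rw [fff, ggf, Finset.sum_mul_sum]
  apply Finset.sum_congr rfl
  intro a ha
  apply Finset.sum_congr rfl
  intro b hb
  rw [mem_Wd] at ha hb
  have htake : (a ++ b).take t = a := by rw [← ha, List.take_left]
  have hdrop : (a ++ b).drop t = b := by rw [← ha, List.drop_left]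
  rw [htake, hdrop, ← ite_and_mul_ennreal]
  by_cases hc : nextOccP w a t ∧ w <:+ w ++ b
  · rw [if_pos hc, if_pos hc]
    have hz2 : z <:+ w ++ a := hzw.trans hc.1.1
    have h2 : z ++ a <:+ w ++ a := by
      obtain ⟨d, hd⟩ := hzw
      exact ⟨d, by rw [← List.append_assoc, hd]⟩
    have hzza : z <:+ z ++ a := suffix_of_suffix_le hz2 h2 (by simp)
    rw [wp_past_append a b z, wp_congr b z (z ++ a) z hz hzza (List.suffix_refl z)]
  · rw [if_neg hc, if_neg hc]

/-- Per-word decomposition of the `(r+2)`-th occurrence by the `(r+1)`-th. -/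
lemma PV3 {w : List Bool} {r n : ℕ} {v : List Bool} (hv : v.length = n) (π : Measure L) :
    (if isRthOcc w v (r+2) n then π (cyl v) else 0)
      = ∑ t ∈ Finset.range (n+1),
          (if isRthOcc w (v.take t) (r+1) t = true ∧ nextOccP w (v.drop t) (n - t)
           then π (cyl v) else 0) := by
  have hvn : v.take n = v := take_self_of_len hv
  by_cases hc : isRthOcc w v (r+2) n = true
  · obtain ⟨hocc, hcnt⟩ := isRthOcc_iff.mp hc
    have hcnt' : (List.range n).countP (occursAt w v) = r + 1 := by omega
    have hpos : 0 < (List.range n).countP (occursAt w v) := by omega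
    obtain ⟨a, hamem, haocc⟩ := List.countP_pos_iff.mp hpos
    rw [List.mem_range] at hamem
    set P : ℕ → Prop := fun t => t < n ∧ occursAt w v t = true with hPdef
    set T := Nat.findGreatest P n with hTdef
    have hPT : P T := Nat.findGreatest_spec (le_of_lt hamem) ⟨hamem, haocc⟩
    have hmax : ∀ m, m ≤ n → P m → m ≤ T := fun m hm hPm => Nat.le_findGreatest hm hPm
    obtain ⟨hTn, hToc⟩ := hPT
    obtain ⟨hkT, hTv, hsufT⟩ := occursAt_iff.mp hToc
    -- counting up to T
    have hsplit : (List.range n).countP (occursAt w v)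
        = (List.range (T+1)).countP (occursAt w v)
          + (List.range (n - T - 1)).countP (fun i => occursAt w v (T+1+i)) := by
      conv_lhs => rw [show n = (T+1) + (n - T - 1) by omega]
      rw [countP_range_add]
    have hrest : (List.range (n - T - 1)).countP (fun i => occursAt w v (T+1+i)) = 0 := by
      apply List.countP_eq_zero.mpr
      intro i hi
      rw [List.mem_range] at hi
      intro hocc'
      have := hmax (T+1+i) (by omega) ⟨by omega, hocc'⟩
      omega
    have hTcnt : (List.range T).countP (occursAt w v) = r := by
      rw [countP_range_succ] at hsplit
      rw [if_pos hToc] at hsplit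
      omega
    have hwv : w <:+ v := by
      obtain ⟨-, -, h3⟩ := occursAt_iff.mp hocc
      rwa [hvn] at h3
    have hwd1 : w <:+ w ++ v.drop T := by
      obtain ⟨c, hcc⟩ := hsufT
      have h2 : w ++ v.drop T <:+ v :=
        ⟨c, by rw [← List.append_assoc, hcc, List.take_append_drop]⟩
      exact suffix_of_suffix_le hwv h2 (by simp)
    have hnext : nextOccP w (v.drop T) (n - T) := by
      refine ⟨hwd1, by omega, ?_⟩
      intro t ht0 htn hsuf
      have hshift := occ_shift hsufT hkT hTv (show T ≤ T + t by omega)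
      rw [show T + t - T = t by omega] at hshift
      have hR : occursAt w (w ++ v.drop T) (w.length + t) = true := by
        rw [occursAt_iff]
        refine ⟨by omega, ?_, hsuf⟩
        simp only [List.length_append, List.length_drop]
        omega
      have hoccTt : occursAt w v (T + t) = true := by rw [hshift]; exact hR
      have := hmax (T + t) (by omega) ⟨by omega, hoccTt⟩
      omega
    rw [if_pos hc, Finset.sum_eq_single_of_mem T (Finset.mem_range.mpr (by omega))]
    · have hcondT : isRthOcc w (v.take T) (r+1) T = true := by
        rw [isRthOcc_iff]
        refine ⟨by rw [occursAt_take le_rfl]; exact hToc, ?_⟩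
        rw [countP_occ_take, hTcnt]
        omega
      rw [if_pos ⟨hcondT, hnext⟩]
    · intro t ht hne
      rw [if_neg]
      rintro ⟨h1, h2⟩
      apply hne
      obtain ⟨h1a, h1b⟩ := isRthOcc_iff.mp h1
      rw [occursAt_take le_rfl] at h1a
      rw [countP_occ_take] at h1b
      have htn : t < n := by
        have := h2.2.1
        omega
      have htT : t ≤ T := hmax t (by omega) ⟨htn, h1a⟩
      rcases Nat.lt_or_ge t T with hlt | hge
      · exfalso
        have hsplit2 : (List.range T).countP (occursAt w v)
            = (List.range t).countP (occursAt w v)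
              + (List.range (T - t)).countP (fun i => occursAt w v (t+i)) := by
          conv_lhs => rw [show T = t + (T - t) by omega]
          rw [countP_range_add]
        have hge1 : 0 < (List.range (T - t)).countP (fun i => occursAt w v (t+i)) := by
          apply List.countP_pos_iff.mpr
          refine ⟨0, List.mem_range.mpr (by omega), ?_⟩
          show occursAt w v (t+0) = true
          rw [Nat.add_zero]
          exact h1a
        omega
      · omega
  · rw [if_neg hc]
    symm
    apply Finset.sum_eq_zero
    intro t ht
    rw [if_neg]
    rintro ⟨h1, h2⟩
    apply hc
    obtain ⟨h1a, h1b⟩ := isRthOcc_iff.mp h1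
    rw [occursAt_take le_rfl] at h1a
    rw [countP_occ_take] at h1b
    obtain ⟨hk, htv, hsuft⟩ := occursAt_iff.mp h1a
    obtain ⟨hwb, hpos, hno⟩ := h2
    have hwv : w <:+ v := by
      obtain ⟨c, hcc⟩ := hsuft
      have h3 : w ++ v.drop t <:+ v :=
        ⟨c, by rw [← List.append_assoc, hcc, List.take_append_drop]⟩
      exact hwb.trans h3
    have occn : occursAt w v n = true :=
      occursAt_iff.mpr ⟨by omega, by omega, by rw [hvn]; exact hwv⟩
    have e0 : occursAt w v (t+0) = true := by rw [Nat.add_zero]; exact h1a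
    have eview : ∀ i, 0 < i → i < n - t → occursAt w v (t+i) = false := by
      intro i hi0 hin
      have hshift := occ_shift hsuft hk htv (show t ≤ t + i by omega)
      rw [show t + i - t = i by omega] at hshift
      rw [hshift]
      apply Bool.eq_false_iff.mpr
      intro hb
      obtain ⟨-, -, hsf⟩ := occursAt_iff.mp hb
      exact hno i hi0 hin hsf
    have hmid : (List.range (n - t)).countP (fun i => occursAt w v (t+i)) = 1 := by
      rw [show n - t = 1 + (n - t - 1) by omega, countP_range_add]
      have hfirst : (List.range 1).countP (fun i => occursAt w v (t+i)) = 1 := by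
        have hr1 : List.range 1 = [0] := rfl
        rw [hr1, List.countP_singleton,
          if_pos (show (fun i => occursAt w v (t+i)) 0 = true from e0)]
      have hsecond : (List.range (n - t - 1)).countP
          (fun i => occursAt w v (t+(1+i))) = 0 := by
        apply List.countP_eq_zero.mpr
        intro i hi
        rw [List.mem_range] at hi
        intro hbad
        rw [eview (1+i) (by omega) (by omega)] at hbad
        simp at hbad
      rw [hfirst, hsecond]
    rw [isRthOcc_iff]
    refine ⟨occn, ?_⟩
    have hsplit3 : (List.range n).countP (occursAt w v)
        = (List.range t).countP (occursAt w v)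
          + (List.range (n - t)).countP (fun i => occursAt w v (t+i)) := by
      conv_lhs => rw [show n = t + (n - t) by omega]
      rw [countP_range_add]
    rw [hsplit3, h1b, hmid]
    omega

/-- Decomposition of the `(r+2)`-th occurrence probability. -/
lemma I3 (hπ : IsStationary κ π) (hκ : IsBambooKernel q1 q00 qinf κ)
    {z w : List Bool} (hz : GoodW z) (hzw : z <:+ w) (r n : ℕ) :
    PPm π w (r+2) n
      = ∑ t ∈ Finset.range (n+1), PPm π w (r+1) t * fff q1 q00 qinf z w (n - t) := by
  have step1 : PPm π w (r+2) n
      = ∑ v ∈ Wd n, ∑ t ∈ Finset.range (n+1),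
          (if isRthOcc w (v.take t) (r+1) t = true ∧ nextOccP w (v.drop t) (n - t)
           then π (cyl v) else 0) := by
    rw [PPm]
    exact Finset.sum_congr rfl (fun v hv => PV3 (mem_Wd.mp hv) π)
  rw [step1, Finset.sum_comm]
  apply Finset.sum_congr rfl
  intro t ht
  rw [Finset.mem_range] at ht
  conv_lhs => rw [show n = t + (n - t) by omega, sum_Wd_append]
  simp only [show t + (n - t) - t = n - t by omega]
  rw [PPm, fff, Finset.sum_mul_sum]
  apply Finset.sum_congr rfl
  intro a ha
  apply Finset.sum_congr rfl
  intro b hb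
  rw [mem_Wd] at ha hb
  have htake : (a ++ b).take t = a := by rw [← ha, List.take_left]
  have hdrop : (a ++ b).drop t = b := by rw [← ha, List.drop_left]
  rw [htake, hdrop, ← ite_and_mul_ennreal]
  by_cases hc : isRthOcc w a (r+1) t = true ∧ nextOccP w b (n - t)
  · rw [if_pos hc, if_pos hc]
    obtain ⟨h1, h2⟩ := hc
    obtain ⟨hocc, -⟩ := isRthOcc_iff.mp h1
    obtain ⟨-, -, hsuf⟩ := occursAt_iff.mp hocc
    rw [take_self_of_len ha] at hsuf
    have hza : z <:+ a := hzw.trans hsuf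
    have hga : GoodW a := GoodW.of_suffix hza hz
    rw [pi_cyl_word hπ hκ b a hga, wp_congr b z a z hz hza (List.suffix_refl z), mul_comm]
  · rw [if_neg hc, if_neg hc]

end Aux5
section Aux6

open MeasureTheory List Finset

variable {q1 q00 : ℕ → Bool → ℝ≥0∞} {qinf : Bool → ℝ≥0∞}
variable {κ : ProbabilityTheory.Kernel L L} {π : Measure L}

lemma cyl_nil : cyl ([] : List Bool) = Set.univ := by
  ext s
  simp [cyl, cylRev]

lemma sum_Wd_pi (π : Measure L) [IsProbabilityMeasure π] :
    ∀ n, ∑ v ∈ Wd n, π (cyl v) = 1 := by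
  intro n
  induction n with
  | zero => rw [Wd_zero, Finset.sum_singleton, cyl_nil, measure_univ]
  | succ n ih =>
      rw [show n + 1 = 1 + n by omega, sum_Wd_append, Finset.sum_comm]
      calc ∑ b ∈ Wd n, ∑ a ∈ Wd 1, π (cyl (a ++ b))
          = ∑ b ∈ Wd n, π (cyl b) :=
            Finset.sum_congr rfl (fun b _ => sum_pi_cyl_append π 1 b)
        _ = 1 := ih

lemma PPm_le_one (π : Measure L) [IsProbabilityMeasure π] (w : List Bool) (r n : ℕ) :
    PPm π w r n ≤ 1 := by
  rw [PPm, ← sum_Wd_pi π n]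
  apply Finset.sum_le_sum
  intro v _
  split_ifs
  · exact le_rfl
  · exact zero_le

lemma PPm_ne_top (π : Measure L) [IsProbabilityMeasure π] (w : List Bool) (r n : ℕ) :
    PPm π w r n ≠ ⊤ := ne_top_of_le_ne_top ENNReal.one_ne_top (PPm_le_one π w r n)

lemma ggf_le_one (hq1 : ∀ n, q1 n false + q1 n true = 1)
    (hq00 : ∀ n, q00 n false + q00 n true = 1)
    (hqinf : qinf false + qinf true = 1) (z w : List Bool) (j : ℕ) :
    ggf q1 q00 qinf z w j ≤ 1 := by
  rw [ggf, ← wp_sum_one hq1 hq00 hqinf j (pastOfWord z)]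
  apply Finset.sum_le_sum
  intro v _
  split_ifs
  · exact le_rfl
  · exact zero_le

lemma fff_le_one (hq1 : ∀ n, q1 n false + q1 n true = 1)
    (hq00 : ∀ n, q00 n false + q00 n true = 1)
    (hqinf : qinf false + qinf true = 1) (z w : List Bool) (j : ℕ) :
    fff q1 q00 qinf z w j ≤ 1 := by
  rw [fff, ← wp_sum_one hq1 hq00 hqinf j (pastOfWord z)]
  apply Finset.sum_le_sum
  intro v _
  split_ifs
  · exact le_rfl
  · exact zero_le

lemma PPm_eq_zero_of_lt {w : List Bool} {t : ℕ} (ht : t < w.length)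
    (π : Measure L) (r : ℕ) : PPm π w r t = 0 := by
  rw [PPm]
  apply Finset.sum_eq_zero
  intro v _
  rw [if_neg]
  intro hc
  obtain ⟨hocc, -⟩ := isRthOcc_iff.mp hc
  obtain ⟨hk, -, -⟩ := occursAt_iff.mp hocc
  omega

lemma ggf_zero (z w : List Bool) : ggf q1 q00 qinf z w 0 = 1 := by
  rw [ggf, Wd_zero, Finset.sum_singleton, if_pos (by simp)]
  rfl

lemma fff_zero (z w : List Bool) : fff q1 q00 qinf z w 0 = 0 := by
  rw [fff, Wd_zero, Finset.sum_singleton, if_neg]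
  rintro ⟨-, h, -⟩
  omega

lemma suffix_wu_iff_small {w u : List Bool} {j : ℕ} (hu : u.length = j)
    (hj1 : 1 ≤ j) (hjk : j < w.length) :
    w <:+ w ++ u ↔ (w.drop j = w.take (w.length - j) ∧ u = w.drop (w.length - j)) := by
  have hdj : (w ++ u).drop j = w.drop j ++ u :=
    List.drop_append_of_le_length (by omega)
  constructor
  · intro h
    rw [List.suffix_iff_eq_drop] at h
    rw [List.length_append, hu, show w.length + j - w.length = j by omega, hdj] at h
    have h1 : w.take (w.length - j) = w.drop j := by
      have h' := congrArg (fun l => List.take (w.length - j) l) h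
      rw [List.take_left' (by rw [List.length_drop])] at h'
      exact h'
    have h2 : w.drop (w.length - j) = u := by
      have h' := congrArg (fun l => List.drop (w.length - j) l) h
      rw [List.drop_left' (by rw [List.length_drop])] at h'
      exact h'
    exact ⟨h1.symm, h2.symm⟩
  · rintro ⟨h1, h2⟩
    rw [List.suffix_iff_eq_drop, List.length_append, hu,
      show w.length + j - w.length = j by omega, hdj, h1, h2]
    exact (List.take_append_drop _ w).symm

lemma ggf_small {z w : List Bool} {j : ℕ} (hj1 : 1 ≤ j) (hjk : j < w.length) :
    ggf q1 q00 qinf z w j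
      = if w.drop j = w.take (w.length - j)
        then qcondB q1 q00 qinf (pastOfWord z) j (w.drop (w.length - j)) else 0 := by
  have hq : qcondB q1 q00 qinf (pastOfWord z) j (w.drop (w.length - j))
      = bambooWordProb q1 q00 qinf (pastOfWord z) (w.drop (w.length - j)) := by
    rw [qcondB_eq_sum, show j - (w.drop (w.length - j)).length = 0 by
        rw [List.length_drop]; omega, Wd_zero, Finset.sum_singleton, List.nil_append]
  rw [ggf]
  by_cases hov : w.drop j = w.take (w.length - j)
  · rw [if_pos hov, hq]
    rw [Finset.sum_eq_single_of_mem (w.drop (w.length - j))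
      (mem_Wd.mpr (by rw [List.length_drop]; omega))]
    · rw [if_pos ((suffix_wu_iff_small (by rw [List.length_drop]; omega) hj1 hjk).mpr
        ⟨hov, rfl⟩)]
    · intro u hu hne
      rw [if_neg]
      intro hcon
      exact hne ((suffix_wu_iff_small (mem_Wd.mp hu) hj1 hjk).mp hcon).2
  · rw [if_neg hov]
    apply Finset.sum_eq_zero
    intro u hu
    rw [if_neg]
    intro hcon
    exact hov ((suffix_wu_iff_small (mem_Wd.mp hu) hj1 hjk).mp hcon).1

lemma suffix_wu_iff_large {w u : List Bool} {j : ℕ} (hu : u.length = j)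
    (hjk : w.length ≤ j) : w <:+ w ++ u ↔ w <:+ u := by
  constructor
  · intro h
    rw [List.suffix_iff_eq_drop] at h ⊢
    rw [List.length_append, hu, show w.length + j - w.length = j by omega,
      show j = w.length + (j - w.length) by omega, List.drop_length_add_append] at h
    rw [hu]
    exact h
  · rintro ⟨c, rfl⟩
    exact ⟨w ++ c, by rw [List.append_assoc]⟩

lemma ggf_large {z w : List Bool} {j : ℕ} (hjk : w.length ≤ j) :
    ggf q1 q00 qinf z w j = qcondB q1 q00 qinf (pastOfWord z) j w := by
  rw [qcondB_eq_sum, ggf]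
  have step : ∀ u ∈ Wd j,
      (if w <:+ w ++ u then bambooWordProb q1 q00 qinf (pastOfWord z) u else 0)
        = (if w <:+ u then bambooWordProb q1 q00 qinf (pastOfWord z) u else 0) := by
    intro u hu
    by_cases hcon : w <:+ u
    · rw [if_pos ((suffix_wu_iff_large (mem_Wd.mp hu) hjk).mpr hcon), if_pos hcon]
    · rw [if_neg (fun hcc => hcon ((suffix_wu_iff_large (mem_Wd.mp hu) hjk).mp hcc)),
        if_neg hcon]
  rw [Finset.sum_congr rfl step]
  conv_lhs => rw [show j = (j - w.length) + w.length by omega, sum_Wd_append]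
  apply Finset.sum_congr rfl
  intro m hm
  rw [Finset.sum_eq_single_of_mem w (mem_Wd.mpr rfl)]
  · rw [if_pos ⟨m, rfl⟩]
  · intro b hb hne
    rw [if_neg]
    intro hcon
    apply hne
    rw [List.suffix_iff_eq_drop] at hcon
    rw [List.length_append, mem_Wd.mp hb,
      show m.length + w.length - w.length = m.length by omega, List.drop_left] at hcon
    exact hcon.symm

lemma getD_reverse' (c : List Bool) (j : ℕ) (hj : j < c.length) :
    c.reverse.getD j false = c.getD (c.length - 1 - j) false := by
  rw [List.getD_eq_getElem _ _ (by rw [List.length_reverse]; omega),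
    List.getD_eq_getElem _ _ (by omega), List.getElem_reverse]

lemma goodW_of_adjacent {v : List Bool} {i : ℕ} (h1 : i + 1 < v.length)
    (h2 : v.getD i false = v.getD (i+1) false) : GoodW v := by
  refine ⟨v.length - 2 - i, by omega, ?_⟩
  rw [getD_reverse' v _ (by omega), getD_reverse' v _ (by omega)]
  rw [show v.length - 1 - (v.length - 2 - i + 1) = i by omega,
    show v.length - 1 - (v.length - 2 - i) = i + 1 by omega]
  exact h2

lemma probOcc_eq_toReal (π : Measure L) [IsProbabilityMeasure π] (w : List Bool)
    (r n : ℕ) : probOcc π w r n = (PPm π w r n).toReal := by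
  rw [probOcc, PPm, sum_Wd n (fun l => if isRthOcc w l r n then (π (cyl l)).toReal else 0),
    ENNReal.toReal_sum (fun a _ => by
      split_ifs
      · exact measure_ne_top π _
      · exact ENNReal.zero_ne_top)]
  apply Finset.sum_congr rfl
  intro l _
  split_ifs
  · rfl
  · simp

end Aux6
section Aux7

open MeasureTheory Finset

variable {q1 q00 : ℕ → Bool → ℝ≥0∞} {qinf : Bool → ℝ≥0∞}
variable {κ : ProbabilityTheory.Kernel L L} {π : Measure L}

lemma summable_coeff {a : ℕ → ℝ} (ha : ∀ n, |a n| ≤ 1) {x : ℝ} (hx : |x| < 1) :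
    Summable (fun n => ‖a n * x ^ n‖) := by
  apply Summable.of_nonneg_of_le (fun n => norm_nonneg _) (fun n => ?_)
    (summable_geometric_of_lt_one (abs_nonneg x) hx)
  rw [norm_mul, norm_pow, Real.norm_eq_abs, Real.norm_eq_abs]
  calc |a n| * |x| ^ n ≤ 1 * |x| ^ n :=
        mul_le_mul_of_nonneg_right (ha n) (pow_nonneg (abs_nonneg x) n)
    _ = |x| ^ n := one_mul _

lemma cauchy_prod {a b : ℕ → ℝ} (ha : ∀ n, |a n| ≤ 1) (hb : ∀ n, |b n| ≤ 1)
    {x : ℝ} (hx : |x| < 1) :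
    (∑' n, a n * x ^ n) * (∑' n, b n * x ^ n)
      = ∑' n : ℕ, (∑ t ∈ Finset.range (n+1), a t * b (n - t)) * x ^ n := by
  rw [tsum_mul_tsum_eq_tsum_sum_antidiagonal_of_summable_norm
    (summable_coeff ha hx) (summable_coeff hb hx)]
  apply tsum_congr
  intro n
  rw [Finset.Nat.sum_antidiagonal_eq_sum_range_succ_mk, Finset.sum_mul]
  apply Finset.sum_congr rfl
  intro t ht
  rw [Finset.mem_range] at ht
  have hxp : x ^ n = x ^ t * x ^ (n - t) := by
    rw [← pow_add]
    congr 1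
    omega
  rw [hxp]
  ring

lemma toReal_le_one_of_le_one {a : ℝ≥0∞} (h : a ≤ 1) : |a.toReal| ≤ 1 := by
  rw [abs_of_nonneg ENNReal.toReal_nonneg]
  have := ENNReal.toReal_mono ENNReal.one_ne_top h
  simpa using this

/-- The central analytic lemma. -/
lemma main_lemma
    (hq1 : ∀ n, q1 n false + q1 n true = 1)
    (hq00 : ∀ n, q00 n false + q00 n true = 1)
    (hqinf : qinf false + qinf true = 1)
    (hκ : IsBambooKernel q1 q00 qinf κ)
    (hπ : IsStationary κ π) [IsProbabilityMeasure π]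
    {z w : List Bool} (hz : GoodW z) (hzw : z <:+ w) (hw1 : 1 ≤ w.length)
    {x : ℝ} (hx : |x| < 1) :
    genFun π w 1 x
        = x ^ w.length * (π (cyl w)).toReal
            / ((1 - x) * SwB q1 q00 qinf (pastOfWord z) w x)
    ∧ ∀ r : ℕ, 1 ≤ r →
        genFun π w r x
          = genFun π w 1 x * (1 - 1 / SwB q1 q00 qinf (pastOfWord z) w x) ^ (r - 1) := by
  classical
  set k := w.length with hk
  set gr : ℕ → ℝ := fun j => (ggf q1 q00 qinf z w j).toReal with hgrdef
  set fr : ℕ → ℝ := fun j => (fff q1 q00 qinf z w j).toReal with hfrdef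
  have hgr1 : ∀ j, |gr j| ≤ 1 :=
    fun j => toReal_le_one_of_le_one (ggf_le_one hq1 hq00 hqinf z w j)
  have hfr1 : ∀ j, |fr j| ≤ 1 :=
    fun j => toReal_le_one_of_le_one (fff_le_one hq1 hq00 hqinf z w j)
  have hpr1 : ∀ r n, |(PPm π w r n).toReal| ≤ 1 :=
    fun r n => toReal_le_one_of_le_one (PPm_le_one π w r n)
  have hgen : ∀ r, genFun π w r x = ∑' n, (PPm π w r n).toReal * x ^ n := by
    intro r
    rw [genFun]
    exact tsum_congr (fun n => by rw [probOcc_eq_toReal])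
  have hggf_ne_top : ∀ j, ggf q1 q00 qinf z w j ≠ ⊤ :=
    fun j => ne_top_of_le_ne_top ENNReal.one_ne_top (ggf_le_one hq1 hq00 hqinf z w j)
  have hfff_ne_top : ∀ j, fff q1 q00 qinf z w j ≠ ⊤ :=
    fun j => ne_top_of_le_ne_top ENNReal.one_ne_top (fff_le_one hq1 hq00 hqinf z w j)
  -- real-valued renewal identity for the first occurrence
  have hI1 : ∀ n, k ≤ n → (π (cyl w)).toReal
      = ∑ t ∈ Finset.range (n+1), (PPm π w 1 t).toReal * gr (n - t) := by
    intro n hn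
    have h2 := I1b hπ hκ hz hzw n
    rw [I1a π hw1 hn] at h2
    have h3 := congrArg ENNReal.toReal h2
    rw [ENNReal.toReal_sum (fun t _ => ENNReal.mul_ne_top (PPm_ne_top π w 1 t)
      (hggf_ne_top (n - t)))] at h3
    simpa only [ENNReal.toReal_mul] using h3
  have hI1' : ∀ n, n < k → ∑ t ∈ Finset.range (n+1), (PPm π w 1 t).toReal * gr (n - t) = 0 := by
    intro n hn
    apply Finset.sum_eq_zero
    intro t ht
    rw [Finset.mem_range] at ht
    rw [PPm_eq_zero_of_lt (by omega) π 1]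
    simp
  -- Cauchy product : Φ₁ · G
  have key1 : (∑' n, (PPm π w 1 n).toReal * x ^ n) * (∑' j, gr j * x ^ j)
      = (π (cyl w)).toReal * x ^ k / (1 - x) := by
    rw [cauchy_prod (hpr1 1) hgr1 hx]
    have hcongr : ∀ n : ℕ, (∑ t ∈ Finset.range (n+1), (PPm π w 1 t).toReal * gr (n - t)) * x ^ n
        = (if k ≤ n then (π (cyl w)).toReal else 0) * x ^ n := by
      intro n
      by_cases hn : k ≤ n
      · rw [if_pos hn, ← hI1 n hn]
      · rw [if_neg hn, hI1' n (by omega), zero_mul]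
    rw [tsum_congr hcongr]
    have hsum : Summable (fun n : ℕ => (if k ≤ n then (π (cyl w)).toReal else 0) * x ^ n) := by
      apply Summable.of_norm
      apply summable_coeff (fun n => ?_) hx
      split_ifs
      · refine toReal_le_one_of_le_one ?_
        rw [← measure_univ (μ := π)]
        exact measure_mono (Set.subset_univ _)
      · simp
    rw [← Summable.sum_add_tsum_nat_add k hsum]
    have hz1 : ∑ i ∈ Finset.range k, (if k ≤ i then (π (cyl w)).toReal else 0) * x ^ i = 0 := by
      apply Finset.sum_eq_zero
      intro i hi
      rw [Finset.mem_range] at hi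
      rw [if_neg (by omega), zero_mul]
    rw [hz1, zero_add]
    have hshift : ∀ i : ℕ, (if k ≤ i + k then (π (cyl w)).toReal else 0) * x ^ (i + k)
        = ((π (cyl w)).toReal * x ^ k) * x ^ i := by
      intro i
      rw [if_pos (by omega), pow_add]
      ring
    rw [tsum_congr hshift, tsum_mul_left,
      tsum_geometric_of_norm_lt_one (by rwa [Real.norm_eq_abs]), div_eq_mul_inv]
  -- G = S_w(x)
  have hsumg : Summable (fun j => gr j * x ^ j) := Summable.of_norm (summable_coeff hgr1 hx)
  have keyG : (∑' j, gr j * x ^ j) = SwB q1 q00 qinf (pastOfWord z) w x := by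
    rw [SwB, CwB, ← Summable.sum_add_tsum_nat_add k hsumg]
    congr 1
    · rw [Finset.range_eq_Ico, Finset.sum_eq_sum_Ico_succ_bot (by omega : (0:ℕ) < k)]
      congr 1
      · show gr 0 * x ^ 0 = 1
        rw [hgrdef]
        simp [ggf_zero]
      · apply Finset.sum_congr rfl
        intro j hj
        rw [Finset.mem_Ico] at hj
        show gr j * x ^ j = _
        rw [hgrdef]
        simp only
        rw [ggf_small hj.1 hj.2]
        split_ifs
        · rfl
        · simp
    · apply tsum_congr
      intro i
      show gr (i + k) * x ^ (i + k) = _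
      rw [hgrdef]
      simp only
      rw [ggf_large (by omega : w.length ≤ i + k), show i + k = k + i by omega]
  -- F·G = G − 1
  have keyF : (∑' j, fr j * x ^ j) * (∑' j, gr j * x ^ j) = (∑' j, gr j * x ^ j) - 1 := by
    rw [cauchy_prod hfr1 hgr1 hx]
    have hco : ∀ j : ℕ, (∑ t ∈ Finset.range (j+1), fr t * gr (j - t)) * x ^ j
        = gr j * x ^ j - (if j = 0 then 1 else 0) := by
      intro j
      by_cases hj : j = 0
      · subst hj
        rw [if_pos rfl]
        show (∑ t ∈ Finset.range 1, fr t * gr (0 - t)) * x ^ 0 = gr 0 * x ^ 0 - 1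
        rw [Finset.sum_range_one]
        have hf0 : fr 0 = 0 := by rw [hfrdef]; simp [fff_zero]
        have hg0 : gr 0 = 1 := by rw [hgrdef]; simp [ggf_zero]
        rw [hf0, hg0]
        ring
      · rw [if_neg hj, sub_zero]
        have h2 := I2 (q1 := q1) (q00 := q00) (qinf := qinf) hz hzw
          (j := j) (by omega)
        have h3 := congrArg ENNReal.toReal h2
        rw [ENNReal.toReal_sum (fun t _ => ENNReal.mul_ne_top (hfff_ne_top t)
          (hggf_ne_top (j - t)))] at h3
        simp only [ENNReal.toReal_mul] at h3
        rw [hgrdef]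
        simp only
        rw [h3]
    rw [tsum_congr hco, Summable.tsum_sub hsumg (summable_of_ne_finset_zero (s := {0})
      (fun j hj => by rw [if_neg (by simpa using hj)]))]
    congr 1
    exact tsum_ite_eq 0 1
  have hGne : (∑' j, gr j * x ^ j) ≠ 0 := by
    intro h0
    rw [h0, mul_zero] at keyF
    norm_num at keyF
  have hSne : SwB q1 q00 qinf (pastOfWord z) w x ≠ 0 := by rw [← keyG]; exact hGne
  have h1x : (1 : ℝ) - x ≠ 0 := by
    have h := abs_lt.mp hx
    intro hcc
    linarith [h.2]
  -- recursion in r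
  have keyR : ∀ r, 1 ≤ r → (∑' n, (PPm π w (r+1) n).toReal * x ^ n)
      = (∑' n, (PPm π w r n).toReal * x ^ n) * (∑' j, fr j * x ^ j) := by
    intro r hr
    rw [cauchy_prod (hpr1 r) hfr1 hx]
    apply tsum_congr
    intro n
    congr 1
    have h2 := I3 hπ hκ hz hzw (r - 1) n
    rw [show r - 1 + 2 = r + 1 by omega, show r - 1 + 1 = r by omega] at h2
    have h3 := congrArg ENNReal.toReal h2
    rw [ENNReal.toReal_sum (fun t _ => ENNReal.mul_ne_top (PPm_ne_top π w r t)
      (hfff_ne_top (n - t)))] at h3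
    simpa only [ENNReal.toReal_mul] using h3
  have hFS : (∑' j, fr j * x ^ j) = 1 - 1 / SwB q1 q00 qinf (pastOfWord z) w x := by
    rw [← keyG]
    have hdiv : (∑' j, fr j * x ^ j)
        = ((∑' j, gr j * x ^ j) - 1) / (∑' j, gr j * x ^ j) := by
      rw [eq_div_iff hGne]
      exact keyF
    rw [hdiv, sub_div, div_self hGne]
  constructor
  · rw [hgen 1, eq_div_iff (mul_ne_zero h1x hSne), ← keyG]
    have e := key1
    rw [eq_div_iff h1x] at e
    linear_combination e
  · intro r hr
    have hmono : ∀ m, 1 ≤ m → genFun π w m x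
        = genFun π w 1 x * (∑' j, fr j * x ^ j) ^ (m - 1) := by
      intro m hm
      induction m, hm using Nat.le_induction with
      | base => simp
      | succ m hm ih =>
          rw [hgen (m+1), keyR m hm, ← hgen m, ih, show m + 1 - 1 = m by omega,
            mul_assoc, ← pow_succ, show m - 1 + 1 = m by omega]
    rw [hmono r hr, hFS]
end Aux7
/-- (Generating functions of word occurrences, bamboo
blossom.) For a SVLMC defined by a probabilized bamboo blossom and a word
`w = w₁…w_k` whose reversed word is not an internal node, for `|x| < 1` the
generating functions of the occurrences of `w` satisfy
`Φ_w⁽¹⁾(x) = x^k π(w) / ((1-x) S_w(x))` and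
`Φ_w⁽ʳ⁾(x) = Φ_w⁽¹⁾(x)(1 - 1/S_w(x))^{r-1}`, where :
(i) if `w = *00(10)^ℓ` (resp. `*11(01)^ℓ0`), the conditioning past of `S_w` is
the reversed word of `pref(w) = (01)^ℓ00` (resp. `(01)^{ℓ+1}1`), i.e. the
matched suffix of `w` itself;
(ii) if `w = *00(10)^ℓ1` (resp. `*11(01)^ℓ`), the conditioning past of `S_w` is
`1(01)^ℓ00` reversed, i.e. `00(10)^ℓ1` (resp. `(10)^ℓ11` reversed, i.e.
`11(01)^ℓ`), again the matched suffix of `w`. -/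
theorem bamboo_occurrence_generating_function
    (q1 q00 : ℕ → Bool → ℝ≥0∞) (qinf : Bool → ℝ≥0∞)
    (hq1 : ∀ n, q1 n false + q1 n true = 1)
    (hq00 : ∀ n, q00 n false + q00 n true = 1)
    (hqinf : qinf false + qinf true = 1)
    (κ : Kernel L L) [IsMarkovKernel κ] (hκ : IsBambooKernel q1 q00 qinf κ)
    (π : Measure L) [IsProbabilityMeasure π] (hπ : IsStationary κ π)
    (w : List Bool) (hlen : 1 ≤ w.length)
    (hint : ¬ ∃ n, w.reverse = pow01 n ∨ w.reverse = pow01 n ++ [false])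
    (x : ℝ) (hx : |x| < 1) :
    ∀ (ℓ : ℕ) (suffix : List Bool),
      (suffix = [false, false] ++ pow10 ℓ ∨
       suffix = [true, true] ++ pow01 ℓ ++ [false] ∨
       suffix = [false, false] ++ pow10 ℓ ++ [true] ∨
       suffix = [true, true] ++ pow01 ℓ) →
      suffix <:+ w →
      (genFun π w 1 x
         = x ^ w.length * (π (cyl w)).toReal
             / ((1 - x) * SwB q1 q00 qinf (pastOfWord suffix) w x) ∧
       ∀ r : ℕ, 1 ≤ r →
         genFun π w r x
           = genFun π w 1 x
               * (1 - 1 / SwB q1 q00 qinf (pastOfWord suffix) w x) ^ (r - 1)) := by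
  intro ℓ suffix hform hsuff
  have hgood : GoodW suffix := by
    rcases hform with h | h | h | h <;> subst h
    · exact goodW_of_adjacent (i := 0) (by
        simp only [List.length_append, List.length_cons, List.length_nil, pow10_length]
        omega) rfl
    · exact goodW_of_adjacent (i := 0) (by
        simp only [List.length_append, List.length_cons, List.length_nil, pow01_length]
        omega) rfl
    · exact goodW_of_adjacent (i := 0) (by
        simp only [List.length_append, List.length_cons, List.length_nil, pow10_length]
        omega) rfl
    · exact goodW_of_adjacent (i := 0) (by
        simp only [List.length_append, List.length_cons, List.length_nil, pow01_length]
        omega) rfl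
  exact main_lemma hq1 hq00 hqinf hκ hπ hgood hsuff hlen hx

end VLMC
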